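/- For the GLL density f(x;θ,λ,p) = θ^(2+p)/(Γ(1+p)(1+p+λθ)) · (−log x)^p (λ − log x) x^(θ−1) on (0,1), the r-th moment satisfies E[X^r] = θ^(2+p)·((r+θ)λ + (1+p)) / ((r+θ)^(2+p)·(1+p+λθ)) for any real r > −θ. -/

import Mathlib

open Real MeasureTheory

/-- The generalized Log-Lindley (GLL) density. -/
noncomputable def gll (θ lam p x : ℝ) : ℝ :=
  θ ^ (2 + p) / (Real.Gamma (1 + p) * (1 + p + lam * θ)) *
    (-Real.log x) ^ p * (lam - Real.log x) * x ^ (θ - 1)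

lemma aux_integrable {q s : ℝ} (hq : -1 < q) (hs : 0 < s) :
    IntegrableOn (fun t : ℝ => t ^ q * Real.exp (-(s * t))) (Set.Ioi 0) := by
  have := integrableOn_rpow_mul_exp_neg_mul_rpow hq (zero_lt_one' ℝ) hs
  simpa [Real.rpow_one, neg_mul] using this

lemma aux_integral {q s : ℝ} (hq : -1 < q) (hs : 0 < s) :
    ∫ t in Set.Ioi (0:ℝ), t ^ q * Real.exp (-(s * t)) =
      (1 / s) ^ (q + 1) * Real.Gamma (q + 1) := by
  have := Real.integral_rpow_mul_exp_neg_mul_Ioi (a := q + 1) (r := s) (by linarith) hs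
  simpa using this

theorem gll_moment (θ lam p r : ℝ) (hθ : 0 < θ) (hlam : 0 ≤ lam) (hp : 0 ≤ p)
    (hr : -θ < r) :
    ∫ x in Set.Ioo (0:ℝ) 1, x ^ r * gll θ lam p x =
      θ ^ (2 + p) * ((r + θ) * lam + (1 + p)) / ((r + θ) ^ (2 + p) * (1 + p + lam * θ)) := by
  set s : ℝ := r + θ with hs_def
  have hs : 0 < s := by simp [hs_def]; linarith
  set C : ℝ := θ ^ (2 + p) / (Real.Gamma (1 + p) * (1 + p + lam * θ)) with hC
  -- substitution x = exp (-t)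
  have himg : (fun t : ℝ => Real.exp (-t)) '' (Set.Ioi 0) = Set.Ioo (0:ℝ) 1 := by
    ext x
    constructor
    · rintro ⟨t, ht, rfl⟩
      have ht' : (0:ℝ) < t := ht
      exact ⟨Real.exp_pos _, Real.exp_lt_one_iff.mpr (by linarith)⟩
    · rintro ⟨hx0, hx1⟩
      exact ⟨-Real.log x, by simpa using Real.log_neg hx0 hx1, by simp [Real.exp_log hx0]⟩
  have hderiv : ∀ t ∈ Set.Ioi (0:ℝ),
      HasDerivWithinAt (fun t : ℝ => Real.exp (-t)) (-Real.exp (-t)) (Set.Ioi 0) t := by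
    intro t _
    exact ((Real.hasDerivAt_exp (-t)).comp t (hasDerivAt_neg t)).hasDerivWithinAt.congr_deriv (by simp)
  have hinj : Set.InjOn (fun t : ℝ => Real.exp (-t)) (Set.Ioi 0) := by
    intro a _ b _ h
    have := Real.exp_injective h
    linarith
  have hsub := MeasureTheory.integral_image_eq_integral_abs_deriv_smul measurableSet_Ioi
    hderiv hinj (fun x => x ^ r * gll θ lam p x)
  rw [himg] at hsub
  rw [hsub]
  -- simplify integrand
  have heq : ∀ t ∈ Set.Ioi (0:ℝ),
      |(-Real.exp (-t))| • ((Real.exp (-t)) ^ r * gll θ lam p (Real.exp (-t))) =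
        C * (lam * (t ^ p * Real.exp (-(s * t))) + t ^ (p + 1) * Real.exp (-(s * t))) := by
    intro t ht
    have ht0 : 0 < t := ht
    have hx : (0:ℝ) < Real.exp (-t) := Real.exp_pos _
    have h1 : |(-Real.exp (-t))| = Real.exp (-t) := by
      rw [abs_neg, abs_of_pos hx]
    have h2 : (Real.exp (-t)) ^ r = Real.exp (-t * r) := by
      rw [Real.rpow_def_of_pos hx, Real.log_exp]
    have h3 : (Real.exp (-t)) ^ (θ - 1) = Real.exp (-t * (θ - 1)) := by
      rw [Real.rpow_def_of_pos hx, Real.log_exp]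
    have h4 : t ^ (p + 1) = t ^ p * t := Real.rpow_add_one ht0.ne' p
    simp only [smul_eq_mul, h1, gll, Real.log_exp, h2, h3, neg_neg, h4]
    rw [show Real.exp (-t) * (Real.exp (-t * r) * (C * t ^ p * (lam - -t) * Real.exp (-t * (θ - 1))))
        = C * ((Real.exp (-t) * Real.exp (-t * r) * Real.exp (-t * (θ - 1))) * (t ^ p * (lam + t)))
        by ring]
    rw [← Real.exp_add, ← Real.exp_add, show -t + -t * r + -t * (θ - 1) = -(s * t) by
      simp [hs_def]; ring]
    ring
  rw [MeasureTheory.setIntegral_congr_fun measurableSet_Ioi heq]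
  have hip : -1 < p := by linarith
  have hip1 : -1 < p + 1 := by linarith
  rw [MeasureTheory.integral_const_mul, MeasureTheory.integral_add
      ((aux_integrable hip hs).const_mul lam) (aux_integrable hip1 hs),
    MeasureTheory.integral_const_mul, aux_integral hip hs, aux_integral hip1 hs]
  -- algebra
  have hG : Real.Gamma (p + 1 + 1) = (p + 1) * Real.Gamma (p + 1) :=
    Real.Gamma_add_one (by linarith)
  rw [hG]
  have hGpos : 0 < Real.Gamma (1 + p) := Real.Gamma_pos_of_pos (by linarith)
  have hD : 0 < 1 + p + lam * θ := by positivity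
  have hA : 0 < s ^ (p + 1) := Real.rpow_pos_of_pos hs _
  have hs2 : s ^ (2 + p) = s ^ (p + 1) * s := by
    rw [← Real.rpow_add_one hs.ne']; ring_nf
  have hinv : (1 / s) ^ (p + 1) = (s ^ (p + 1))⁻¹ := by
    rw [one_div, ← Real.rpow_neg_one s, ← Real.rpow_mul hs.le,
      show (-1) * (p + 1) = -(p + 1) by ring, Real.rpow_neg hs.le]
  have hinv2 : (1 / s) ^ (p + 1 + 1) = (s ^ (p + 1) * s)⁻¹ := by
    rw [Real.rpow_add_one (by positivity : (1/s : ℝ) ≠ 0), hinv, one_div, mul_inv]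
  rw [hinv, hinv2, hC, hs2]
  have h1p : Real.Gamma (1 + p) = Real.Gamma (p + 1) := by ring_nf
  rw [h1p]
  have hGne : Real.Gamma (p + 1) ≠ 0 := by rw [← h1p]; exact hGpos.ne'
  field_simp
  ring
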